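/- Let n ≥ r+3 and r ≥ 1, and let λ be an eigenvalue of the adjacency matrix of S_{n,r} with λ ∉ {0, −1}. Then λ has an eigenvector x ∈ ℝ^n with entries x_i = 1 for 1 ≤ i ≤ r (the pendant vertices), x_{r+1} = λ (the vertex of degree n−1), and x_i = λ − r/(λ+1) for r+2 ≤ i ≤ n (the vertices of degree n−r−1). -/

import Mathlib

open Matrix

/-- `sGraph n r` is the graph `S_{n,r}` obtained from the complete graph `K_{n-r}` by
attaching `r` pendant edges at one of its vertices.  The pendant vertices are
`0, …, r-1` (i.e. `v_1, …, v_r`), the vertex of degree `n-1` is `r` (i.e. `v_{r+1}`),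
and the remaining clique vertices are `r+1, …, n-1` (i.e. `v_{r+2}, …, v_n`). -/
def sGraph (n r : ℕ) : SimpleGraph (Fin n) where
  Adj i j := i ≠ j ∧ ((i : ℕ) = r ∨ (j : ℕ) = r ∨ (r < (i : ℕ) ∧ r < (j : ℕ)))
  symm := by
    constructor
    intro i j h
    exact ⟨h.1.symm, by tauto⟩
  loopless := by
    constructor
    intro i h
    exact h.1 rfl

instance sGraphDecidable (n r : ℕ) : DecidableRel (sGraph n r).Adj :=
  fun _ _ => inferInstanceAs (Decidable (_ ∧ _))

namespace SAux

variable {n r : ℕ}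

lemma adj_iff (i j : Fin n) :
    (sGraph n r).Adj i j ↔ i ≠ j ∧ ((i : ℕ) = r ∨ (j : ℕ) = r ∨ (r < (i : ℕ) ∧ r < (j : ℕ))) :=
  Iff.rfl

lemma mulVec_eq (v : Fin n → ℝ) (i : Fin n) :
    ((sGraph n r).adjMatrix ℝ).mulVec v i = ∑ j : Fin n, if (sGraph n r).Adj i j then v j else 0 := by
  simp [Matrix.mulVec, dotProduct, SimpleGraph.adjMatrix_apply, ite_mul]

lemma row_pendant (hrn : r < n) (v : Fin n → ℝ) {i : Fin n} (hi : (i : ℕ) < r) :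
    ((sGraph n r).adjMatrix ℝ).mulVec v i = v ⟨r, hrn⟩ := by
  rw [mulVec_eq]
  have key : ∀ j : Fin n, (sGraph n r).Adj i j ↔ j = ⟨r, hrn⟩ := by
    intro j
    rw [adj_iff]
    constructor
    · rintro ⟨hne, h | h | h⟩
      · omega
      · exact Fin.ext h
      · omega
    · rintro rfl
      refine ⟨?_, Or.inr (Or.inl rfl)⟩
      intro hij
      have := congrArg Fin.val hij
      simp at this
      omega
  simp only [key]
  rw [Finset.sum_ite_eq' Finset.univ]
  simp

lemma row_hub (v : Fin n → ℝ) {i : Fin n} (hi : (i : ℕ) = r) :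
    ((sGraph n r).adjMatrix ℝ).mulVec v i = (∑ j : Fin n, v j) - v i := by
  rw [mulVec_eq]
  have key : ∀ j : Fin n, (sGraph n r).Adj i j ↔ ¬ (j = i) := by
    intro j
    rw [adj_iff]
    constructor
    · rintro ⟨hne, -⟩ h
      exact hne h.symm
    · intro h
      exact ⟨fun hh => h hh.symm, Or.inl hi⟩
  simp only [key]
  have e : ∀ j : Fin n, (if ¬ j = i then v j else 0) = v j - (if j = i then v j else 0) := by
    intro j
    by_cases h : j = i <;> simp [h]
  simp only [e]
  rw [Finset.sum_sub_distrib, Finset.sum_ite_eq' Finset.univ]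
  simp

lemma row_clique (v : Fin n → ℝ) {i : Fin n} (hi : r < (i : ℕ)) :
    ((sGraph n r).adjMatrix ℝ).mulVec v i
      = (∑ j : Fin n, if r ≤ (j : ℕ) then v j else 0) - v i := by
  rw [mulVec_eq]
  have key : ∀ j : Fin n, (sGraph n r).Adj i j ↔ (¬ j = i ∧ r ≤ (j : ℕ)) := by
    intro j
    rw [adj_iff]
    constructor
    · rintro ⟨hne, h⟩
      refine ⟨fun hh => hne hh.symm, ?_⟩
      omega
    · rintro ⟨hne, hle⟩
      refine ⟨fun hh => hne hh.symm, ?_⟩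
      rcases eq_or_lt_of_le hle with h | h
      · exact Or.inr (Or.inl h.symm)
      · exact Or.inr (Or.inr ⟨hi, h⟩)
  simp only [key]
  have e : ∀ j : Fin n, (if (¬ j = i ∧ r ≤ (j : ℕ)) then v j else 0)
      = (if r ≤ (j : ℕ) then v j else 0) - (if j = i then v j else 0) := by
    intro j
    by_cases h : j = i
    · subst h; simp [le_of_lt hi]
    · simp [h]
  simp only [e]
  rw [Finset.sum_sub_distrib, Finset.sum_ite_eq' Finset.univ]
  simp

lemma split_ge (hrn : r < n) (v : Fin n → ℝ) :
    (∑ j : Fin n, if r ≤ (j : ℕ) then v j else 0)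
      = v ⟨r, hrn⟩ + ∑ j : Fin n, if r < (j : ℕ) then v j else 0 := by
  have e : ∀ j : Fin n, (if r ≤ (j : ℕ) then v j else 0)
      = (if j = ⟨r, hrn⟩ then v j else 0) + (if r < (j : ℕ) then v j else 0) := by
    intro j
    rcases lt_trichotomy (j : ℕ) r with h | h | h
    · have h2 : ¬ j = (⟨r, hrn⟩ : Fin n) := by
        intro hh; have := congrArg Fin.val hh; simp at this; omega
      rw [if_neg (by omega), if_neg h2, if_neg (by omega)]
      simp
    · have h2 : j = (⟨r, hrn⟩ : Fin n) := Fin.ext h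
      subst h2
      simp
    · have h2 : ¬ j = (⟨r, hrn⟩ : Fin n) := by
        intro hh; have := congrArg Fin.val hh; simp at this; omega
      rw [if_pos (by omega), if_neg h2, if_pos h]
      simp
  simp only [e]
  rw [Finset.sum_add_distrib, Finset.sum_ite_eq' Finset.univ]
  simp

lemma card_lt (hrn : r < n) :
    (Finset.univ.filter fun j : Fin n => (j : ℕ) < r).card = r := by
  have : (Finset.univ.filter fun j : Fin n => (j : ℕ) < r) = Finset.Iio ⟨r, hrn⟩ := by
    ext j
    simp [Fin.lt_def]
  rw [this, Fin.card_Iio]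

lemma card_gt (hrn : r < n) :
    (Finset.univ.filter fun j : Fin n => r < (j : ℕ)).card = n - 1 - r := by
  have : (Finset.univ.filter fun j : Fin n => r < (j : ℕ)) = Finset.Ioi ⟨r, hrn⟩ := by
    ext j
    simp [Fin.lt_def]
  rw [this, Fin.card_Ioi]

lemma sum_ite_lt_const (hrn : r < n) (f : Fin n → ℝ) (c : ℝ)
    (hf : ∀ j : Fin n, (j : ℕ) < r → f j = c) :
    (∑ j : Fin n, if (j : ℕ) < r then f j else 0) = (r : ℝ) * c := by
  rw [Finset.sum_ite, Finset.sum_const_zero, add_zero,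
    Finset.sum_congr rfl (fun j hj => hf j (Finset.mem_filter.mp hj).2),
    Finset.sum_const, card_lt hrn, nsmul_eq_mul]

lemma sum_ite_gt_const (hrn : r < n) (f : Fin n → ℝ) (c : ℝ)
    (hf : ∀ j : Fin n, r < (j : ℕ) → f j = c) :
    (∑ j : Fin n, if r < (j : ℕ) then f j else 0) = ((n - 1 - r : ℕ) : ℝ) * c := by
  rw [Finset.sum_ite, Finset.sum_const_zero, add_zero,
    Finset.sum_congr rfl (fun j hj => hf j (Finset.mem_filter.mp hj).2),
    Finset.sum_const, card_gt hrn, nsmul_eq_mul]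

lemma sum_split (hrn : r < n) (v : Fin n → ℝ) :
    (∑ j : Fin n, v j) = (∑ j : Fin n, if (j : ℕ) < r then v j else 0) + v ⟨r, hrn⟩
      + ∑ j : Fin n, if r < (j : ℕ) then v j else 0 := by
  have e : ∀ j : Fin n, v j = (if (j : ℕ) < r then v j else 0)
      + (if j = ⟨r, hrn⟩ then v j else 0) + (if r < (j : ℕ) then v j else 0) := by
    intro j
    rcases lt_trichotomy (j : ℕ) r with h | h | h
    · have h2 : ¬ j = (⟨r, hrn⟩ : Fin n) := by
        intro hh; have := congrArg Fin.val hh; simp at this; omega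
      rw [if_pos h, if_neg h2, if_neg (by omega)]
      simp
    · have h2 : j = (⟨r, hrn⟩ : Fin n) := Fin.ext h
      subst h2
      simp
    · have h2 : ¬ j = (⟨r, hrn⟩ : Fin n) := by
        intro hh; have := congrArg Fin.val hh; simp at this; omega
      rw [if_neg (by omega), if_neg h2, if_pos h]
      simp
  calc (∑ j : Fin n, v j) = ∑ j : Fin n, ((if (j : ℕ) < r then v j else 0)
      + (if j = ⟨r, hrn⟩ then v j else 0) + (if r < (j : ℕ) then v j else 0)) :=
        Finset.sum_congr rfl (fun j _ => e j)
    _ = _ := by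
        rw [Finset.sum_add_distrib, Finset.sum_add_distrib, Finset.sum_ite_eq' Finset.univ]
        simp

end SAux

open SAux in
/-- For `n ≥ r + 3`, `r ≥ 1`, every eigenvalue `λ ∉ {0, -1}` of the
adjacency matrix of `S_{n,r}` has an eigenvector `x` whose entries are `1` on the pendant
vertices, `λ` on the vertex of degree `n - 1`, and `λ - r/(λ+1)` on the vertices of degree
`n - r - 1`. -/
theorem stmt3 {n r : ℕ} (hr : 1 ≤ r) (hn : r + 3 ≤ n) (lam : ℝ)
    (hlam : ∃ v : Fin n → ℝ, v ≠ 0 ∧ ((sGraph n r).adjMatrix ℝ).mulVec v = lam • v)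
    (h0 : lam ≠ 0) (h1 : lam ≠ -1) (x : Fin n → ℝ)
    (hx : x = fun i : Fin n => if (i : ℕ) < r then (1 : ℝ)
      else if (i : ℕ) = r then lam else lam - r / (lam + 1)) :
    x ≠ 0 ∧ ((sGraph n r).adjMatrix ℝ).mulVec x = lam • x := by
  have hrn : r < n := by omega
  have hl1 : lam + 1 ≠ 0 := fun h => h1 (by linarith)
  set p : Fin n := ⟨r, hrn⟩ with hp
  set k : ℝ := ((n - 1 - r : ℕ) : ℝ) with hk
  -- Step 1: extract the polynomial relation from the given eigenvector
  obtain ⟨v, hv0, hveq⟩ := hlam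
  have hveq' : ∀ i, ((sGraph n r).adjMatrix ℝ).mulVec v i = lam * v i := by
    intro i
    rw [hveq]
    rfl
  set S : ℝ := ∑ j : Fin n, if r < (j : ℕ) then v j else 0 with hSdef
  set t : ℝ := v p with ht
  have hpend : ∀ i : Fin n, (i : ℕ) < r → v i = t / lam := by
    intro i hi
    have h := hveq' i
    rw [row_pendant hrn v hi] at h
    field_simp
    linarith [h]
  have hcli : ∀ i : Fin n, r < (i : ℕ) → v i = (t + S) / (lam + 1) := by
    intro i hi
    have h := hveq' i
    rw [row_clique v hi, split_ge hrn v] at h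
    rw [eq_div_iff hl1]
    linarith [h]
  have hS : S = k * ((t + S) / (lam + 1)) := by
    rw [hk]
    conv_lhs => rw [hSdef]
    exact sum_ite_gt_const hrn v _ hcli
  have hhub : lam * t = (r : ℝ) * (t / lam) + S := by
    have h := hveq' p
    rw [row_hub v (by simp [hp]), sum_split hrn v,
      sum_ite_lt_const hrn v (t / lam) hpend] at h
    linarith [h]
  -- v p ≠ 0
  have htne : t ≠ 0 := by
    intro ht0
    have hS0 : S = 0 := by
      rw [ht0] at hhub
      simp at hhub
      linarith
    apply hv0
    funext i
    rcases lt_trichotomy (i : ℕ) r with h | h | h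
    · rw [hpend i h, ht0]; simp
    · have : i = p := Fin.ext (by simp [hp, h])
      rw [this, ← ht, ht0]; rfl
    · rw [hcli i h, ht0, hS0]; simp
  have hwne : (t + S) / (lam + 1) ≠ 0 := by
    intro hw0
    rw [hw0, mul_zero] at hS
    rw [div_eq_zero_iff] at hw0
    rcases hw0 with hw0 | hw0
    · exact htne (by linarith)
    · exact hl1 hw0
  set w : ℝ := (t + S) / (lam + 1) with hw
  have e1 : lam ^ 2 * t = (r : ℝ) * t + lam * S := by
    have h := congrArg (fun z => lam * z) hhub
    calc lam ^ 2 * t = lam * (lam * t) := by ring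
      _ = lam * ((r : ℝ) * (t / lam) + S) := h
      _ = (r : ℝ) * t + lam * S := by field_simp
  have e3 : w * (lam + 1) = t + S := by
    rw [hw, div_mul_cancel₀ _ hl1]
  have hkey : k * (lam ^ 2 + lam - (r : ℝ)) = (lam ^ 2 - (r : ℝ)) * (lam + 1) := by
    apply mul_left_cancel₀ hwne
    linear_combination (-1 : ℝ) * e1 + (-(lam ^ 2 + lam - (r : ℝ))) * hS
      + ((r : ℝ) - lam ^ 2) * e3
  have hkc : k * (lam - (r : ℝ) / (lam + 1)) = lam ^ 2 - (r : ℝ) := by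
    rw [div_eq_iff hl1] at *
    field_simp
    linear_combination hkey
  -- Step 2: verify x is an eigenvector
  set c : ℝ := lam - (r : ℝ) / (lam + 1) with hc
  have hx1 : ∀ j : Fin n, (j : ℕ) < r → x j = 1 := by
    intro j hj
    rw [hx]
    simp only
    rw [if_pos hj]
  have hxp : x p = lam := by
    rw [hx]
    simp [hp]
  have hxc : ∀ j : Fin n, r < (j : ℕ) → x j = c := by
    intro j hj
    rw [hx]
    simp only
    rw [if_neg (by omega), if_neg (by omega)]
  have hclam : (lam + 1) * c = lam * (lam + 1) - (r : ℝ) := by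
    rw [hc]
    field_simp
  constructor
  · intro hxz
    apply h0
    have := congrFun hxz p
    rw [hxp] at this
    exact this
  · funext i
    have hRHS : (lam • x) i = lam * x i := rfl
    rw [hRHS]
    rcases lt_trichotomy (i : ℕ) r with h | h | h
    · rw [row_pendant hrn x h, hx1 i h]
      rw [hxp]
      ring
    · have hip : i = p := Fin.ext (by simp [hp, h])
      subst hip
      rw [row_hub x h, sum_split hrn x, sum_ite_lt_const hrn x 1 hx1,
        sum_ite_gt_const hrn x c hxc, hxp]
      linear_combination hkc
    · rw [row_clique x h, split_ge hrn x, sum_ite_gt_const hrn x c hxc,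
        hxp, hxc i h]
      linear_combination hkc - hclam
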